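/- For every natural number n, applying the product of operators (X + q s D_q)(X + q³ s D_q) ⋯ (X + q^{2n-1} s D_q) (with the factor (X + q^{2n-1} s D_q) acting first) to the constant polynomial 1 yields the polynomial h_n(x,s). -/
import Mathlib

set_option maxHeartbeats 1000000
set_option synthInstance.maxHeartbeats 400000


noncomputable section

/-- The field `ℚ(q,s)` of rational functions in two indeterminates. -/
abbrev F : Type := FractionRing (MvPolynomial (Fin 2) ℚ)

/-- The indeterminate `q`. -/
def q : F := algebraMap (MvPolynomial (Fin 2) ℚ) F (MvPolynomial.X 0)

/-- The indeterminate `s`. -/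
def s : F := algebraMap (MvPolynomial (Fin 2) ℚ) F (MvPolynomial.X 1)

/-- The q-integer `[n]_q = 1 + q + ⋯ + q^{n-1}`. -/
def qInt (n : ℕ) : F := ∑ i ∈ Finset.range n, q ^ i

/-- The q-factorial `[n]_q! = ∏_{k=1}^n [k]_q`. -/
def qFact (n : ℕ) : F := ∏ k ∈ Finset.range n, qInt (k + 1)

/-- The q-binomial coefficient `[n choose k]_q = [n]_q!/([k]_q! [n-k]_q!)`. -/
def qBinom (n k : ℕ) : F := qFact n / (qFact k * qFact (n - k))

/-- The operator `X` of multiplication by `x` on `F[x]`. -/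
def Xop : Module.End F (Polynomial F) := LinearMap.mulLeft F Polynomial.X

/-- Division by `x` (discarding the constant term), as a linear map. -/
def divXL : Polynomial F →ₗ[F] Polynomial F where
  toFun := Polynomial.divX
  map_add' p r := Polynomial.divX_add
  map_smul' a p := by
    ext n
    simp [Polynomial.coeff_divX, Polynomial.coeff_smul]

/-- The q-derivative `D_q f(x) = (f(qx) - f(x))/((q-1)x)`; it is the F-linear
operator on `F[x]` determined by `D_q x^n = [n]_q x^{n-1}`. -/
def Dq : Module.End F (Polynomial F) :=
  (q - 1)⁻¹ •
    (divXL ∘ₗ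
      ((Polynomial.aeval (Polynomial.C q * Polynomial.X)).toLinearMap - LinearMap.id))

/-- The polynomials `h_n(x,t) = Σ_j q^{j²} t^j [n]_q!/((1+q)⋯(1+q^j)·[j]_q!·[n-2j]_q!)
x^{n-2j}` (the parameter `t` will be specialized to `s` or `q²s`). -/
def h (t : F) (n : ℕ) : Polynomial F :=
  ∑ j ∈ Finset.range (n / 2 + 1),
    Polynomial.C (q ^ (j ^ 2) * t ^ j * qFact n /
        ((∏ i ∈ Finset.range j, (1 + q ^ (i + 1))) * qFact j * qFact (n - 2 * j))) *
      Polynomial.X ^ (n - 2 * j)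


/-- `G(n) = (X + q s D_q)(X + q³ s D_q) ⋯ (X + q^{2n-1} s D_q)`,
with the factor `(X + q^{2n-1} s D_q)` acting first. -/
def Gop : ℕ → Module.End F (Polynomial F)
  | 0 => 1
  | n + 1 => Gop n * (Xop + (q ^ (2 * n + 1) * s) • Dq)

/-! ### Auxiliary material -/

abbrev Rpoly := MvPolynomial (Fin 2) ℚ

lemma alg_ne_zero {p : Rpoly} (hp : p ≠ 0) : algebraMap Rpoly F p ≠ 0 := by
  intro hzero
  exact hp (IsFractionRing.injective Rpoly F (by simpa using hzero))

lemma q_sub_one_ne : q - 1 ≠ 0 := by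
  have hrw : q - 1 = algebraMap Rpoly F (MvPolynomial.X 0 - 1) := by simp [q]
  rw [hrw]
  apply alg_ne_zero
  intro hzero
  have := congrArg (MvPolynomial.eval (fun _ => (0 : ℚ))) hzero
  simp at this

lemma qInt_eq (n : ℕ) :
    qInt n = algebraMap Rpoly F (∑ i ∈ Finset.range n, MvPolynomial.X 0 ^ i) := by
  simp [qInt, q, map_sum]

lemma qInt_succ_ne (n : ℕ) : qInt (n + 1) ≠ 0 := by
  rw [qInt_eq]
  apply alg_ne_zero
  intro hzero
  have := congrArg (MvPolynomial.eval (fun _ => (0 : ℚ))) hzero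
  rw [map_sum] at this
  simp [Finset.sum_range_succ'] at this

lemma one_add_q_pow_ne (n : ℕ) : (1 + q ^ (n + 1)) ≠ 0 := by
  have hrw : 1 + q ^ (n + 1) = algebraMap Rpoly F (1 + MvPolynomial.X 0 ^ (n + 1)) := by
    simp [q]
  rw [hrw]
  apply alg_ne_zero
  intro hzero
  have := congrArg (MvPolynomial.eval (fun _ => (0 : ℚ))) hzero
  simp at this

lemma qFact_ne (n : ℕ) : qFact n ≠ 0 := by
  rw [qFact]
  exact Finset.prod_ne_zero_iff.2 fun k _ => qInt_succ_ne k

lemma qFact_succ (n : ℕ) : qFact (n + 1) = qFact n * qInt (n + 1) :=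
  Finset.prod_range_succ _ _

lemma qInt_add (m k : ℕ) : qInt (m + k) = qInt m + q ^ m * qInt k := by
  rw [qInt, Finset.sum_range_add, qInt, qInt, Finset.mul_sum]
  simp [pow_add]

lemma qInt_two_mul (k : ℕ) : qInt (2 * k) = (1 + q ^ k) * qInt k := by
  rw [two_mul, qInt_add]; ring

lemma qInt_one : qInt 1 = 1 := by simp [qInt]

open Polynomial in
lemma Dq_X_pow (n : ℕ) : Dq (Polynomial.X ^ n : Polynomial F) = C (qInt n) * X ^ (n - 1) := by
  rw [Dq]
  simp only [LinearMap.smul_apply, LinearMap.comp_apply, LinearMap.sub_apply,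
    AlgHom.toLinearMap_apply, LinearMap.id_apply, map_pow, aeval_X]
  have h1 : (C q * X : Polynomial F) ^ n - X ^ n = C (q ^ n - 1) * X ^ n := by
    rw [mul_pow, ← C_pow, map_sub, sub_mul, map_one, one_mul]
  rw [h1]
  have h2 : divXL (C (q ^ n - 1) * X ^ n : Polynomial F) =
      if n = 0 then 0 else C (q ^ n - 1) * X ^ (n - 1) := by
    show Polynomial.divX _ = _
    rw [Polynomial.divX_C_mul_X_pow]
  rw [h2]
  rcases n with _ | k
  · simp [qInt]
  · simp only [Nat.succ_ne_zero, if_false]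
    rw [Polynomial.smul_eq_C_mul, ← mul_assoc, ← map_mul]
    congr 2
    have hg := geom_sum_mul q (k + 1)
    rw [qInt, inv_mul_eq_iff_eq_mul₀ q_sub_one_ne]
    linear_combination -hg

/-- The product `(1+q)(1+q²)⋯(1+q^j)`. -/
def Aprod (j : ℕ) : F := ∏ i ∈ Finset.range j, (1 + q ^ (i + 1))

/-- The coefficient of `x^{n-2j}` in `h t n`. -/
def cc (t : F) (n j : ℕ) : F :=
  q ^ (j ^ 2) * t ^ j * qFact n / (Aprod j * qFact j * qFact (n - 2 * j))

lemma Aprod_ne (j : ℕ) : Aprod j ≠ 0 := by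
  rw [Aprod]
  exact Finset.prod_ne_zero_iff.2 fun i _ => one_add_q_pow_ne i

lemma Aprod_succ (j : ℕ) : Aprod (j + 1) = Aprod j * (1 + q ^ (j + 1)) :=
  Finset.prod_range_succ _ _

lemma h_eq (t : F) (n : ℕ) :
    h t n = ∑ j ∈ Finset.range (n / 2 + 1),
      Polynomial.C (cc t n j) * Polynomial.X ^ (n - 2 * j) := rfl

lemma cc_zero (t : F) (n : ℕ) : cc t n 0 = 1 := by
  rw [cc, show (0:ℕ) ^ 2 = 0 from rfl, show n - 2 * 0 = n by omega,
    show Aprod 0 = 1 from rfl, show qFact 0 = 1 from rfl, pow_zero, pow_zero]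
  rw [one_mul, one_mul]
  exact div_self (qFact_ne n)

/-- The key coefficient recurrence, away from the top term. -/
lemma keyI (t : F) (n j : ℕ) (hj : 2 * j + 2 ≤ n) :
    cc t (n + 1) (j + 1)
      = cc (q ^ 2 * t) n (j + 1) + q * t * qInt (n - 2 * j) * cc (q ^ 2 * t) n j := by
  obtain ⟨a, rfl⟩ : ∃ a, n = a + (2 * j + 2) := ⟨n - (2 * j + 2), by omega⟩
  have e1 : a + (2 * j + 2) + 1 - 2 * (j + 1) = a + 1 := by omega
  have e2 : a + (2 * j + 2) - 2 * (j + 1) = a := by omega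
  have e3 : a + (2 * j + 2) - 2 * j = a + 2 := by omega
  rw [cc, cc, cc, e1, e2, e3]
  have hq1 : qFact (a + (2 * j + 2) + 1)
      = qFact (a + (2 * j + 2)) * qInt (a + (2 * j + 2) + 1) := qFact_succ _
  have hq2 : qFact (j + 1) = qFact j * qInt (j + 1) := qFact_succ _
  have hq3 : qFact (a + 1) = qFact a * qInt (a + 1) := qFact_succ _
  have hq4 : qFact (a + 2) = qFact a * qInt (a + 1) * qInt (a + 2) := by
    rw [show a + 2 = (a + 1) + 1 from rfl, qFact_succ, qFact_succ]
  have hdec : qInt (a + (2 * j + 2) + 1)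
      = (1 + q ^ (j + 1)) * qInt (j + 1) + q ^ (j + 1) * q ^ (j + 1) * qInt (a + 1) := by
    rw [show a + (2 * j + 2) + 1 = 2 * (j + 1) + (a + 1) by ring, qInt_add, qInt_two_mul]
    ring
  have hpow : q ^ ((j + 1) ^ 2) = q ^ (j ^ 2) * q ^ j * q ^ j * q := by
    rw [show (j + 1) ^ 2 = j ^ 2 + j + j + 1 by ring, pow_add, pow_add, pow_add, pow_one]
  rw [hq1, hq2, hq3, hq4, Aprod_succ, hdec, hpow]
  have n1 := Aprod_ne j
  have n2 := qFact_ne j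
  have n3 := qFact_ne a
  have n4 := qInt_succ_ne j
  have n5 := qInt_succ_ne a
  have n6 : qInt (a + 2) ≠ 0 := qInt_succ_ne (a + 1)
  have n7 := one_add_q_pow_ne j
  rw [← mul_div_assoc,
    div_add_div _ _
      (mul_ne_zero (mul_ne_zero (mul_ne_zero n1 n7) (mul_ne_zero n2 n4)) n3)
      (mul_ne_zero (mul_ne_zero n1 n2) (mul_ne_zero (mul_ne_zero n3 n5) n6)),
    div_eq_div_iff
      (mul_ne_zero (mul_ne_zero (mul_ne_zero n1 n7) (mul_ne_zero n2 n4))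
        (mul_ne_zero n3 n5))
      (mul_ne_zero
        (mul_ne_zero (mul_ne_zero (mul_ne_zero n1 n7) (mul_ne_zero n2 n4)) n3)
        (mul_ne_zero (mul_ne_zero n1 n2) (mul_ne_zero (mul_ne_zero n3 n5) n6)))]
  ring

/-- The key coefficient recurrence, at the top term for odd `n`. -/
lemma keyII (t : F) (m : ℕ) :
    cc t (2 * m + 1 + 1) (m + 1)
      = q * t * qInt (2 * m + 1 - 2 * m) * cc (q ^ 2 * t) (2 * m + 1) m := by
  have e1 : 2 * m + 1 + 1 - 2 * (m + 1) = 0 := by omega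
  have e2 : 2 * m + 1 - 2 * m = 1 := by omega
  have e3 : 2 * m + 1 - 2 * m = 1 := by omega
  rw [cc, cc, e1, e2]
  have hq0 : qFact 0 = 1 := Finset.prod_range_zero _
  have hq1 : qFact (2 * m + 1 + 1) = qFact (2 * m + 1) * qInt (2 * m + 1 + 1) := qFact_succ _
  have hq2 : qFact (m + 1) = qFact m * qInt (m + 1) := qFact_succ _
  have hq3 : qFact 1 = 1 := by rw [show (1 : ℕ) = 0 + 1 from rfl, qFact_succ, hq0, qInt_one, one_mul]
  have hdec : qInt (2 * m + 1 + 1) = (1 + q ^ (m + 1)) * qInt (m + 1) := by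
    rw [show 2 * m + 1 + 1 = 2 * (m + 1) by ring, qInt_two_mul]
  have hpow : q ^ ((m + 1) ^ 2) = q ^ (m ^ 2) * q ^ m * q ^ m * q := by
    rw [show (m + 1) ^ 2 = m ^ 2 + m + m + 1 by ring, pow_add, pow_add, pow_add, pow_one]
  rw [hq0, hq1, hq2, hq3, Aprod_succ, hdec, hpow, qInt_one]
  have n1 := Aprod_ne m
  have n2 := qFact_ne m
  have n3 := qInt_succ_ne m
  have n4 := one_add_q_pow_ne m
  rw [← mul_div_assoc,
    div_eq_div_iff
      (mul_ne_zero (mul_ne_zero (mul_ne_zero n1 n4) (mul_ne_zero n2 n3)) one_ne_zero)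
      (mul_ne_zero (mul_ne_zero n1 n2) one_ne_zero)]
  ring

open Polynomial in
lemma op_term (t a : F) (e : ℕ) :
    (Xop + (q * t) • Dq) (C a * X ^ e)
      = C a * X ^ (e + 1) + C (q * t * qInt e * a) * X ^ (e - 1) := by
  rw [LinearMap.add_apply, LinearMap.smul_apply]
  have hx : Xop (C a * X ^ e) = C a * X ^ (e + 1) := by
    show X * (C a * X ^ e) = _
    ring
  have hd : Dq (C a * X ^ e) = C (qInt e * a) * X ^ (e - 1) := by
    rw [← Polynomial.smul_eq_C_mul, map_smul, Dq_X_pow, Polynomial.smul_eq_C_mul,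
      ← mul_assoc, ← map_mul, mul_comm a (qInt e)]
  rw [hx, hd, Polynomial.smul_eq_C_mul, ← mul_assoc, ← Polynomial.C_mul,
    show q * t * qInt e * a = q * t * (qInt e * a) by ring]

open Polynomial in
/-- The key step: applying `X + qt D_q` to `h_{q²t,n}` gives `h_{t,n+1}`. -/
lemma step (t : F) (n : ℕ) :
    (Xop + (q * t) • Dq) (h (q ^ 2 * t) n) = h t (n + 1) := by
  rw [h_eq, map_sum]
  simp only [op_term]
  rw [Finset.sum_add_distrib, h_eq]
  rcases Nat.even_or_odd n with he | ho
  · -- even case : n = 2 * m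
    obtain ⟨m, rfl⟩ : ∃ m, n = 2 * m := by
      obtain ⟨k, hk⟩ := he; exact ⟨k, by omega⟩
    have d1 : 2 * m / 2 = m := by omega
    have d2 : (2 * m + 1) / 2 = m := by omega
    rw [d1, d2]
    have hQm : C (q * t * qInt (2 * m - 2 * m) * cc (q ^ 2 * t) (2 * m) m)
        * X ^ (2 * m - 2 * m - 1) = (0 : Polynomial F) := by
      rw [show 2 * m - 2 * m = 0 by omega, show qInt 0 = 0 from Finset.sum_range_zero _,
        mul_zero, zero_mul, map_zero, zero_mul]
    have hQ : (∑ j ∈ Finset.range (m + 1),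
          C (q * t * qInt (2 * m - 2 * j) * cc (q ^ 2 * t) (2 * m) j) * X ^ (2 * m - 2 * j - 1))
        = ∑ j ∈ Finset.range m,
          C (q * t * qInt (2 * m - 2 * j) * cc (q ^ 2 * t) (2 * m) j) * X ^ (2 * m - 2 * j - 1) := by
      rw [Finset.sum_range_succ, hQm, add_zero]
    rw [hQ,
      Finset.sum_range_succ' (fun j => C (cc (q ^ 2 * t) (2 * m) j) * X ^ (2 * m - 2 * j + 1)) m,
      Finset.sum_range_succ' (fun j => C (cc t (2 * m + 1) j) * X ^ (2 * m + 1 - 2 * j)) m]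
    have h0 : C (cc (q ^ 2 * t) (2 * m) 0) * X ^ (2 * m - 2 * 0 + 1)
        = (C (cc t (2 * m + 1) 0) * X ^ (2 * m + 1 - 2 * 0) : Polynomial F) := by
      rw [cc_zero, cc_zero, show 2 * m - 2 * 0 + 1 = 2 * m + 1 - 2 * 0 by omega]
    have hterm : ∀ j ∈ Finset.range m,
        C (cc (q ^ 2 * t) (2 * m) (j + 1)) * X ^ (2 * m - 2 * (j + 1) + 1)
          + C (q * t * qInt (2 * m - 2 * j) * cc (q ^ 2 * t) (2 * m) j) * X ^ (2 * m - 2 * j - 1)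
        = (C (cc t (2 * m + 1) (j + 1)) * X ^ (2 * m + 1 - 2 * (j + 1)) : Polynomial F) := by
      intro j hj
      rw [Finset.mem_range] at hj
      rw [show 2 * m - 2 * (j + 1) + 1 = 2 * m - 2 * j - 1 by omega,
        show 2 * m + 1 - 2 * (j + 1) = 2 * m - 2 * j - 1 by omega,
        ← add_mul, ← Polynomial.C_add, keyI t (2 * m) j (by omega)]
    rw [← Finset.sum_congr rfl hterm, Finset.sum_add_distrib, h0]
    ring
  · -- odd case : n = 2 * m + 1
    obtain ⟨m, rfl⟩ := ho
    have d1 : (2 * m + 1) / 2 = m := by omega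
    have d2 : (2 * m + 1 + 1) / 2 = m + 1 := by omega
    rw [d1, d2]
    rw [Finset.sum_range_succ
        (fun j => C (q * t * qInt (2 * m + 1 - 2 * j) * cc (q ^ 2 * t) (2 * m + 1) j)
          * X ^ (2 * m + 1 - 2 * j - 1)) m,
      Finset.sum_range_succ'
        (fun j => C (cc (q ^ 2 * t) (2 * m + 1) j) * X ^ (2 * m + 1 - 2 * j + 1)) m,
      Finset.sum_range_succ'
        (fun j => C (cc t (2 * m + 1 + 1) j) * X ^ (2 * m + 1 + 1 - 2 * j)) (m + 1),
      Finset.sum_range_succ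
        (fun j => C (cc t (2 * m + 1 + 1) (j + 1)) * X ^ (2 * m + 1 + 1 - 2 * (j + 1))) m]
    have h0 : C (cc (q ^ 2 * t) (2 * m + 1) 0) * X ^ (2 * m + 1 - 2 * 0 + 1)
        = (C (cc t (2 * m + 1 + 1) 0) * X ^ (2 * m + 1 + 1 - 2 * 0) : Polynomial F) := by
      rw [cc_zero, cc_zero, show 2 * m + 1 - 2 * 0 + 1 = 2 * m + 1 + 1 - 2 * 0 by omega]
    have htop : C (q * t * qInt (2 * m + 1 - 2 * m) * cc (q ^ 2 * t) (2 * m + 1) m)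
          * X ^ (2 * m + 1 - 2 * m - 1)
        = (C (cc t (2 * m + 1 + 1) (m + 1)) * X ^ (2 * m + 1 + 1 - 2 * (m + 1)) : Polynomial F) := by
      rw [keyII t m, show 2 * m + 1 - 2 * m - 1 = 2 * m + 1 + 1 - 2 * (m + 1) by omega]
    have hterm : ∀ j ∈ Finset.range m,
        C (cc (q ^ 2 * t) (2 * m + 1) (j + 1)) * X ^ (2 * m + 1 - 2 * (j + 1) + 1)
          + C (q * t * qInt (2 * m + 1 - 2 * j) * cc (q ^ 2 * t) (2 * m + 1) j)
            * X ^ (2 * m + 1 - 2 * j - 1)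
        = (C (cc t (2 * m + 1 + 1) (j + 1)) * X ^ (2 * m + 1 + 1 - 2 * (j + 1)) : Polynomial F) := by
      intro j hj
      rw [Finset.mem_range] at hj
      rw [show 2 * m + 1 - 2 * (j + 1) + 1 = 2 * m + 1 - 2 * j - 1 by omega,
        show 2 * m + 1 + 1 - 2 * (j + 1) = 2 * m + 1 - 2 * j - 1 by omega,
        ← add_mul, ← Polynomial.C_add, keyI t (2 * m + 1) j (by omega)]
    rw [← Finset.sum_congr rfl hterm, Finset.sum_add_distrib, h0, htop]
    ring

/-- Two-parameter version of `Gop`: factors `(X + q^{2k-1} t D_q)`. -/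
def GT (t : F) : ℕ → Module.End F (Polynomial F)
  | 0 => 1
  | n + 1 => (Xop + (q * t) • Dq) * GT (q ^ 2 * t) n

lemma GT_succ_right (n : ℕ) :
    ∀ t : F, GT t (n + 1) = GT t n * (Xop + (q ^ (2 * n + 1) * t) • Dq) := by
  induction n with
  | zero =>
      intro t
      show (Xop + (q * t) • Dq) * 1 = 1 * (Xop + (q ^ (2 * 0 + 1) * t) • Dq)
      rw [mul_one, one_mul, show q ^ (2 * 0 + 1) * t = q * t by ring]
  | succ n ih =>
      intro t
      have hsc : q ^ (2 * n + 1) * (q ^ 2 * t) = q ^ (2 * (n + 1) + 1) * t := by ring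
      show (Xop + (q * t) • Dq) * GT (q ^ 2 * t) (n + 1)
          = ((Xop + (q * t) • Dq) * GT (q ^ 2 * t) n) * (Xop + (q ^ (2 * (n + 1) + 1) * t) • Dq)
      rw [ih (q ^ 2 * t), hsc, mul_assoc]

lemma Gop_eq_GT (n : ℕ) : Gop n = GT s n := by
  induction n with
  | zero => rfl
  | succ n ih =>
      show Gop n * _ = _
      rw [ih, ← GT_succ_right]

lemma h_zero (t : F) : h t 0 = 1 := by
  rw [h_eq]
  rw [Finset.sum_range_one, cc_zero]
  simp

lemma GT_apply_one : ∀ (n : ℕ) (t : F), GT t n (1 : Polynomial F) = h t n := by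
  intro n
  induction n with
  | zero => intro t; rw [h_zero]; rfl
  | succ n ih =>
      intro t
      show ((Xop + (q * t) • Dq) * GT (q ^ 2 * t) n) 1 = _
      rw [Module.End.mul_apply, ih (q ^ 2 * t), step]

/- STATEMENT 11: G(n) 1 = h_n(x,s). -/
theorem Gop_apply_one (n : ℕ) : Gop n (1 : Polynomial F) = h s n := by
  rw [Gop_eq_GT, GT_apply_one]

end
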